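/- Let G be a finite simple graph on n vertices with diameter exactly d ≥ 2, let x and y be vertices at distance d, let P be an (x,y)-path of length d, and let S be the set of the n - d - 1 vertices of G not on P. Then the number of edges of G satisfies |E(G)| ≤ d + 3(n - d - 1) + (n - d - 1)(n - d - 2)/2, where the three summands bound respectively the edges of P together with all other edges between vertices of P, the edges between S and P, and the edges inside S. -/

import Mathlib

/-- Let `G` be a finite simple graph on `n` vertices with diameter exactly `d ≥ 2`,
let `x` and `y` be vertices at distance `d`, let `P` be an `(x,y)`-path of length `d`
with vertices `v 0, ..., v d`, and let `S` be the set of the `n - d - 1` vertices of `G`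
not on `P`. Then `|E(G)| ≤ d + 3(n - d - 1) + (n - d - 1)(n - d - 2)/2`, where the three
summands bound respectively the edges of `P` together with all other edges between
vertices of `P`, the edges between `S` and `P`, and the edges inside `S`. -/
theorem ore_edge_count_decomposition {V : Type*} [Fintype V] (G : SimpleGraph V)
    [DecidableRel G.Adj] (n d : ℕ) (hd : 2 ≤ d)
    (hcard : Fintype.card V = n) (hconn : G.Connected) (hdiam : G.diam = d)
    (x y : V) (hdist : G.dist x y = d)
    (v : Fin (d + 1) → V) (hinj : Function.Injective v)
    (hx : v 0 = x) (hy : v (Fin.last d) = y)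
    (hpath : ∀ i : Fin d, G.Adj (v i.castSucc) (v i.succ)) :
    -- the edges of `P` together with all other edges between vertices of `P`
    {e ∈ G.edgeSet | ∀ z ∈ e, z ∈ Set.range v}.ncard ≤ d ∧
    -- the edges between `S` and `P`
    {e ∈ G.edgeSet | (∃ z ∈ e, z ∈ Set.range v) ∧ ∃ z ∈ e, z ∉ Set.range v}.ncard ≤
      3 * (n - d - 1) ∧
    -- the edges inside `S`
    {e ∈ G.edgeSet | ∀ z ∈ e, z ∉ Set.range v}.ncard ≤ (n - d - 1) * (n - d - 2) / 2 ∧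
    -- the total bound
    G.edgeFinset.card ≤ d + 3 * (n - d - 1) + (n - d - 1) * (n - d - 2) / 2 := by
  classical
  -- upper bound on distances along the path
  have hadjnat : ∀ b : ℕ, (hb : b < d) →
      G.Adj (v ⟨b, by omega⟩) (v ⟨b + 1, by omega⟩) := by
    intro b hb
    have := hpath ⟨b, hb⟩
    simpa [Fin.castSucc, Fin.succ] using this
  have hub' : ∀ b : ℕ, (hb : b < d + 1) → ∀ a : ℕ, (ha : a ≤ b) →
      G.dist (v ⟨a, by omega⟩) (v ⟨b, hb⟩) ≤ b - a := by
    intro b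
    induction b with
    | zero => intro _ a ha; interval_cases a; simp
    | succ b ih =>
      intro hb a ha
      rcases Nat.eq_or_lt_of_le ha with h | h
      · subst h; simp
      · have h1 : a ≤ b := by omega
        have h2 := ih (by omega) a h1
        have hadj := hadjnat b (by omega)
        calc G.dist (v ⟨a, by omega⟩) (v ⟨b + 1, hb⟩)
            ≤ G.dist (v ⟨a, by omega⟩) (v ⟨b, by omega⟩) +
              G.dist (v ⟨b, by omega⟩) (v ⟨b + 1, hb⟩) := hconn.dist_triangle
          _ ≤ (b - a) + 1 := by
              refine add_le_add h2 ?_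
              rw [SimpleGraph.dist_eq_one_iff_adj.mpr hadj]
          _ = b + 1 - a := by omega
  have hub : ∀ i j : Fin (d + 1), (i : ℕ) ≤ (j : ℕ) →
      G.dist (v i) (v j) ≤ (j : ℕ) - (i : ℕ) := by
    intro i j h
    exact hub' j.1 j.2 i.1 h
  -- lower bound on distances along the path
  have hlb : ∀ i j : Fin (d + 1), (i : ℕ) ≤ (j : ℕ) →
      (j : ℕ) - (i : ℕ) ≤ G.dist (v i) (v j) := by
    intro i j h
    have h0 : G.dist x (v i) ≤ (i : ℕ) := by
      have := hub 0 i (by simp)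
      simpa [hx] using this
    have h1 : G.dist (v j) y ≤ d - (j : ℕ) := by
      have := hub j (Fin.last d) (by simp [Fin.last]; omega)
      rw [hy] at this
      simpa [Fin.last] using this
    have t1 : G.dist x y ≤ G.dist x (v i) + G.dist (v i) y := hconn.dist_triangle
    have t2 : G.dist (v i) y ≤ G.dist (v i) (v j) + G.dist (v j) y := hconn.dist_triangle
    have hj : (j : ℕ) ≤ d := by omega
    omega
  -- adjacent path vertices are consecutive
  have hstep : ∀ i j : Fin (d + 1), (i : ℕ) < (j : ℕ) → G.Adj (v i) (v j) →
      (j : ℕ) = (i : ℕ) + 1 := by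
    intro i j hij hadj
    have h1 : G.dist (v i) (v j) = 1 := SimpleGraph.dist_eq_one_iff_adj.mpr hadj
    have h2 := hlb i j (le_of_lt hij)
    omega
  -- a vertex off the path is adjacent to path vertices within a window of size 2
  have hnear : ∀ (s : V) (i j : Fin (d + 1)), (i : ℕ) ≤ (j : ℕ) →
      G.Adj s (v i) → G.Adj s (v j) → (j : ℕ) - (i : ℕ) ≤ 2 := by
    intro s i j hij hi hj
    have h1 : G.dist (v i) s = 1 := SimpleGraph.dist_eq_one_iff_adj.mpr hi.symm
    have h2 : G.dist s (v j) = 1 := SimpleGraph.dist_eq_one_iff_adj.mpr hj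
    have t : G.dist (v i) (v j) ≤ G.dist (v i) s + G.dist s (v j) := hconn.dist_triangle
    have := hlb i j hij
    omega
  set R : Set V := Set.range v with hR
  set A : Finset (Sym2 V) := G.edgeFinset.filter (fun e => ∀ z ∈ e, z ∈ R) with hA
  set B : Finset (Sym2 V) :=
    G.edgeFinset.filter (fun e => (∃ z ∈ e, z ∈ R) ∧ ∃ z ∈ e, z ∉ R) with hB
  set C : Finset (Sym2 V) := G.edgeFinset.filter (fun e => ∀ z ∈ e, z ∉ R) with hC
  -- set/finset conversion
  have hsetA : {e ∈ G.edgeSet | ∀ z ∈ e, z ∈ Set.range v}.ncard = A.card := by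
    rw [hA, ← Set.ncard_coe_finset]
    congr 1
    ext e
    simp [SimpleGraph.mem_edgeFinset, hR]
  have hsetB : {e ∈ G.edgeSet | (∃ z ∈ e, z ∈ Set.range v) ∧ ∃ z ∈ e, z ∉ Set.range v}.ncard
      = B.card := by
    rw [hB, ← Set.ncard_coe_finset]
    congr 1
    ext e
    simp [SimpleGraph.mem_edgeFinset, hR]
  have hsetC : {e ∈ G.edgeSet | ∀ z ∈ e, z ∉ Set.range v}.ncard = C.card := by
    rw [hC, ← Set.ncard_coe_finset]
    congr 1
    ext e
    simp [SimpleGraph.mem_edgeFinset, hR]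
  -- the off-path vertex set
  have hn1 : d + 1 ≤ n := by
    rw [← hcard]
    simpa using Fintype.card_le_of_injective v hinj
  set T : Finset V := Finset.univ.filter (fun p => p ∉ R) with hT
  have hTcard : T.card = n - d - 1 := by
    have h1 : Finset.univ.filter (fun p => p ∈ R) = Finset.image v Finset.univ := by
      ext p
      simp [hR]
    have h2 : (Finset.image v Finset.univ).card = d + 1 := by
      rw [Finset.card_image_of_injective _ hinj]
      simp
    have h3 : T = Finset.univ \ Finset.image v Finset.univ := by
      ext p
      simp [hT, hR]
    rw [h3, Finset.card_sdiff_of_subset (Finset.subset_univ _), h2, Finset.card_univ, hcard]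
    omega
  -- Part A
  have partA : A.card ≤ d := by
    set f : Fin d → Sym2 V := fun i => s(v i.castSucc, v i.succ) with hf
    have hsub : A ⊆ Finset.image f Finset.univ := by
      intro e he
      rw [hA, Finset.mem_filter] at he
      obtain ⟨he1, he2⟩ := he
      rw [SimpleGraph.mem_edgeFinset] at he1
      induction e using Sym2.ind with
      | _ a b =>
        have hadj : G.Adj a b := he1
        obtain ⟨i, rfl⟩ := he2 a (Sym2.mem_mk_left a b)
        obtain ⟨j, rfl⟩ := he2 b (Sym2.mem_mk_right (v i) b)
        have hij : i ≠ j := fun h => hadj.ne (congrArg v h)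
        rcases lt_or_gt_of_ne (fun h => hij (Fin.val_injective h) : (i:ℕ) ≠ (j:ℕ)) with h | h
        · have hj1 : (j : ℕ) = (i : ℕ) + 1 := hstep i j h hadj
          have hid : (i : ℕ) < d := by omega
          refine Finset.mem_image.mpr ⟨⟨i, hid⟩, Finset.mem_univ _, ?_⟩
          have e1 : ((⟨(i : ℕ), hid⟩ : Fin d).castSucc : Fin (d+1)) = i := Fin.ext rfl
          have e2 : ((⟨(i : ℕ), hid⟩ : Fin d).succ : Fin (d+1)) = j := Fin.ext (by simp [hj1])
          show s(v (⟨(i : ℕ), hid⟩ : Fin d).castSucc, v (⟨(i : ℕ), hid⟩ : Fin d).succ) = s(v i, v j)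
          rw [e1, e2]
        · have hi1 : (i : ℕ) = (j : ℕ) + 1 := hstep j i h hadj.symm
          have hjd : (j : ℕ) < d := by omega
          refine Finset.mem_image.mpr ⟨⟨j, hjd⟩, Finset.mem_univ _, ?_⟩
          have e1 : ((⟨(j : ℕ), hjd⟩ : Fin d).castSucc : Fin (d+1)) = j := Fin.ext rfl
          have e2 : ((⟨(j : ℕ), hjd⟩ : Fin d).succ : Fin (d+1)) = i := Fin.ext (by simp [hi1])
          show s(v (⟨(j : ℕ), hjd⟩ : Fin d).castSucc, v (⟨(j : ℕ), hjd⟩ : Fin d).succ) = s(v i, v j)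
          rw [e1, e2, Sym2.eq_swap]
    calc A.card ≤ (Finset.image f Finset.univ).card := Finset.card_le_card hsub
      _ ≤ (Finset.univ : Finset (Fin d)).card := Finset.card_image_le
      _ = d := by simp
  -- Part B
  have partB : B.card ≤ 3 * (n - d - 1) := by
    set f : Sym2 V → V := fun e => if h : ∃ z ∈ e, z ∉ R then h.choose else x with hfB
    set g : Sym2 V → V := fun e => if h : ∃ z ∈ e, z ∈ R then h.choose else x with hgB
    have hfm : ∀ e ∈ B, f e ∈ e ∧ f e ∉ R := by
      intro e he
      rw [hB, Finset.mem_filter] at he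
      obtain ⟨-, -, h⟩ := he
      rw [hfB]
      simp only [dif_pos h]
      exact ⟨h.choose_spec.1, h.choose_spec.2⟩
    have hgm : ∀ e ∈ B, g e ∈ e ∧ g e ∈ R := by
      intro e he
      rw [hB, Finset.mem_filter] at he
      obtain ⟨-, h, -⟩ := he
      rw [hgB]
      simp only [dif_pos h]
      exact ⟨h.choose_spec.1, h.choose_spec.2⟩
    have heq : ∀ e ∈ B, e = s(f e, g e) := by
      intro e he
      obtain ⟨hf1, hf2⟩ := hfm e he
      obtain ⟨hg1, hg2⟩ := hgm e he
      have hne' : f e ≠ g e := fun h => hf2 (h ▸ hg2)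
      exact ((Sym2.mem_and_mem_iff hne').mp ⟨hf1, hg1⟩)
    have key := Finset.card_le_mul_card_image_of_maps_to (f := f) (s := B) (t := T) ?_ 3 ?_
    · rw [hTcard] at key; exact key
    · intro e he
      rw [hT, Finset.mem_filter]
      exact ⟨Finset.mem_univ _, (hfm e he).2⟩
    · intro s _
      set N : Finset V := Finset.univ.filter (fun p => G.Adj s p ∧ p ∈ R) with hN
      set I : Finset (Fin (d + 1)) := Finset.univ.filter (fun i => G.Adj s (v i)) with hI
      have hNI : N ⊆ Finset.image v I := by
        intro p hp
        rw [hN, Finset.mem_filter] at hp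
        obtain ⟨-, hadj, hi⟩ := hp
        obtain ⟨i, rfl⟩ := hi
        exact Finset.mem_image.mpr ⟨i, by simp [hI, hadj], rfl⟩
      have hIcard : I.card ≤ 3 := by
        rcases I.eq_empty_or_nonempty with h | h
        · simp [h]
        · set m := I.min' h with hm
          have hImem : G.Adj s (v m) := (Finset.mem_filter.mp (I.min'_mem h)).2
          have hsub : I.card ≤ (Finset.Icc (m : ℕ) ((m : ℕ) + 2)).card := by
            refine Finset.card_le_card_of_injOn (fun i => (i : ℕ)) ?_ ?_
            · intro i hi
              have h1 : m ≤ i := I.min'_le i hi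
              have h1' : (m : ℕ) ≤ (i : ℕ) := h1
              have hi' : G.Adj s (v i) := (Finset.mem_filter.mp hi).2
              have := hnear s m i h1' hImem hi'
              simp only [Finset.coe_Icc, Set.mem_Icc, Finset.mem_coe, Finset.mem_Icc]
              omega
            · intro a _ b _ hab
              exact Fin.val_injective hab
          have : (Finset.Icc (m : ℕ) ((m : ℕ) + 2)).card = 3 := by
            rw [Nat.card_Icc]; omega
          omega
      have hfiber : (B.filter (fun e => f e = s)).card ≤ N.card := by
        apply Finset.card_le_card_of_injOn g
        · intro e he
          rw [Finset.mem_coe, Finset.mem_filter] at he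
          obtain ⟨heB, hfe⟩ := he
          have hg2 := (hgm e heB).2
          have hadj : G.Adj (f e) (g e) := by
            have hmem : e ∈ G.edgeSet := by
              rw [hB, Finset.mem_filter] at heB
              exact SimpleGraph.mem_edgeFinset.mp heB.1
            rw [heq e heB, SimpleGraph.mem_edgeSet] at hmem
            exact hmem
          rw [hN, Finset.mem_coe, Finset.mem_filter]
          exact ⟨Finset.mem_univ _, hfe ▸ hadj, hg2⟩
        · intro e1 h1 e2 h2 hgg
          simp only [Finset.coe_filter, Set.mem_setOf_eq] at h1 h2
          rw [heq e1 h1.1, heq e2 h2.1, h1.2, h2.2, hgg]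
      calc (B.filter (fun e => f e = s)).card ≤ N.card := hfiber
        _ ≤ (Finset.image v I).card := Finset.card_le_card hNI
        _ ≤ I.card := Finset.card_image_le
        _ ≤ 3 := hIcard
  -- Part C
  have partC : C.card ≤ (n - d - 1) * (n - d - 2) / 2 := by
    set D : Finset (Sym2 V) := T.image Sym2.diag with hD
    have hCsub : C ⊆ T.sym2 := by
      intro e he
      rw [hC, Finset.mem_filter] at he
      rw [Finset.mem_sym2_iff]
      intro a ha
      rw [hT, Finset.mem_filter]
      exact ⟨Finset.mem_univ _, he.2 a ha⟩
    have hDsub : D ⊆ T.sym2 := by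
      intro e he
      obtain ⟨a, ha, rfl⟩ := Finset.mem_image.mp he
      exact Finset.diag_mem_sym2_iff.mpr ha
    have hdisj : Disjoint C D := by
      rw [Finset.disjoint_left]
      intro e heC heD
      obtain ⟨a, ha, rfl⟩ := Finset.mem_image.mp heD
      rw [hC, Finset.mem_filter] at heC
      exact G.not_isDiag_of_mem_edgeFinset heC.1 (Sym2.diag_isDiag a)
    have hDcard : D.card = T.card := Finset.card_image_of_injective _ Sym2.diag_injective
    have hun := Finset.card_le_card (Finset.union_subset hCsub hDsub)
    rw [Finset.card_union_of_disjoint hdisj, hDcard, Finset.card_sym2] at hun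
    have hch : (T.card + 1).choose 2 = T.card + T.card.choose 2 := by
      rw [Nat.choose_succ_succ, Nat.choose_one_right]
    have hle : C.card ≤ T.card.choose 2 := by omega
    rw [Nat.choose_two_right, hTcard] at hle
    have : n - d - 1 - 1 = n - d - 2 := by omega
    rw [this] at hle
    exact hle
  -- total
  have hzm : ∀ e : Sym2 V, ∃ z, z ∈ e := fun e => ⟨e.out.1, Sym2.out_fst_mem e⟩
  have cover : G.edgeFinset = A ∪ B ∪ C := by
    ext e
    simp only [hA, hB, hC, Finset.mem_union, Finset.mem_filter]
    constructor
    · intro he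
      by_cases h1 : ∀ z ∈ e, z ∈ R
      · exact Or.inl (Or.inl ⟨he, h1⟩)
      by_cases h3 : ∀ z ∈ e, z ∉ R
      · exact Or.inr ⟨he, h3⟩
      · push_neg at h1 h3
        obtain ⟨z1, hz1, hz1'⟩ := h1
        obtain ⟨z2, hz2, hz2'⟩ := h3
        exact Or.inl (Or.inr ⟨he, ⟨z2, hz2, hz2'⟩, ⟨z1, hz1, hz1'⟩⟩)
    · rintro ((⟨h, -⟩ | ⟨h, -⟩) | ⟨h, -⟩) <;> exact h
  have dAB : Disjoint A B := by
    rw [Finset.disjoint_left]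
    intro e heA heB
    rw [hA, Finset.mem_filter] at heA
    rw [hB, Finset.mem_filter] at heB
    obtain ⟨z, hz, hz'⟩ := heB.2.2
    exact hz' (heA.2 z hz)
  have dAC : Disjoint A C := by
    rw [Finset.disjoint_left]
    intro e heA heC
    rw [hA, Finset.mem_filter] at heA
    rw [hC, Finset.mem_filter] at heC
    obtain ⟨z, hz⟩ := hzm e
    exact heC.2 z hz (heA.2 z hz)
  have dBC : Disjoint B C := by
    rw [Finset.disjoint_left]
    intro e heB heC
    rw [hB, Finset.mem_filter] at heB
    rw [hC, Finset.mem_filter] at heC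
    obtain ⟨z, hz, hz'⟩ := heB.2.1
    exact heC.2 z hz hz'
  have htot : G.edgeFinset.card = A.card + B.card + C.card := by
    rw [cover, Finset.card_union_of_disjoint (Finset.disjoint_union_left.mpr ⟨dAC, dBC⟩),
      Finset.card_union_of_disjoint dAB]
  refine ⟨by rw [hsetA]; exact partA, by rw [hsetB]; exact partB, by rw [hsetC]; exact partC, ?_⟩
  rw [htot]
  exact add_le_add (add_le_add partA partB) partC
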